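/- In the explicit construction, assume in addition that i ≥ 1 is large enough that #Δ_i^{(m)} ≥ d for every m ∈ {1,…,M(i)}. Let f(x) := Σ_{j=0}^{d−1} cos(2π·2^j·x) and define ν_k := 2^k + m for k ∈ Δ_i^{(m)}. Then for every x ∈ ℝ, |Σ_{k∈Δ_i} f(ν_k x) − Σ_{m=1}^{M(i)} ((Σ_{j=0}^{d−1} cos(2π·2^j·m·x))·(Σ_{k∈Δ_i^{(m)}} cos(2π·2^k·x)) − (Σ_{j=0}^{d−1} sin(2π·2^j·m·x))·(Σ_{k∈Δ_i^{(m)}} sin(2π·2^k·x)))| ≤ d²·M(i). -/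

import Mathlib

open Real MeasureTheory Filter Finset

noncomputable section

/-- The block `Δ_i` of `R^i` consecutive positive integers. -/
def Block (R i : ℕ) : Finset ℕ :=
  Finset.Icc ((R ^ i - R) / (R - 1) + 1) ((R ^ (i + 1) - R) / (R - 1))

/-- `M(i) = ⌈i^(1-ε)⌉`. -/
def Mfun (ε : ℝ) (i : ℕ) : ℕ := ⌈(i : ℝ) ^ (1 - ε)⌉₊

/-- The explicit construction: parameters `ε ∈ (0,1)`, an integer `R > 8/ε`, an integer
`d ≥ 1`, for each `i ≥ 1` a partition of `Δ_i` into consecutive intervals of integers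
`Δ_i^(1) < ⋯ < Δ_i^(M(i))` (element-wise) of essentially equal cardinality, and the
sequence `n_k := 2^(2^(i^4)) * (2^k + m)` for `k ∈ Δ_i^(m)`. -/
structure ExplicitConstruction where
  ε : ℝ
  R : ℕ
  d : ℕ
  sub : ℕ → ℕ → Finset ℕ
  n : ℕ → ℕ
  hε : ε ∈ Set.Ioo (0 : ℝ) 1
  hR : 8 / ε < (R : ℝ)
  hd : 1 ≤ d
  hpart : ∀ i, 1 ≤ i → Block R i = (Finset.Icc 1 (Mfun ε i)).biUnion (sub i)
  hconsec : ∀ i, 1 ≤ i → ∀ m ∈ Finset.Icc 1 (Mfun ε i), ∃ lo hi, sub i m = Finset.Icc lo hi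
  horder : ∀ i, 1 ≤ i → ∀ m ∈ Finset.Icc 1 (Mfun ε i), ∀ m' ∈ Finset.Icc 1 (Mfun ε i),
    m < m' → ∀ k ∈ sub i m, ∀ l ∈ sub i m', k < l
  hcard : ∀ i, 1 ≤ i → ∀ m ∈ Finset.Icc 1 (Mfun ε i),
    |((sub i m).card : ℝ) - (R : ℝ) ^ i / (Mfun ε i : ℝ)| ≤ 1
  hn : ∀ i, 1 ≤ i → ∀ m ∈ Finset.Icc 1 (Mfun ε i), ∀ k ∈ sub i m,
    n k = 2 ^ 2 ^ i ^ 4 * (2 ^ k + m)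

/-- The decomposition (4.8)–(4.11): with `f(x) = ∑_{j<d} cos(2π 2^j x)` and
`ν_k = 2^k + m` for `k ∈ Δ_i^(m)`, if every sub-block has at least `d` elements, then
`∑_{k ∈ Δ_i} f(ν_k x)` agrees with
`∑_m (∑_j cos(2π 2^j m x))(∑_{k ∈ Δ_i^(m)} cos(2π 2^k x))
   - (∑_j sin(2π 2^j m x))(∑_{k ∈ Δ_i^(m)} sin(2π 2^k x))`
up to an error of at most `d² M(i)`, uniformly in `x`. -/
lemma aux_sum_diff (A B : Finset ℕ) (g : ℕ → ℝ) (hg : ∀ t, |g t| ≤ 1) :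
    |∑ t ∈ A, g t - ∑ t ∈ B, g t| ≤ ((A \ B).card : ℝ) + ((B \ A).card : ℝ) := by
  have hA := Finset.sum_inter_add_sum_sdiff A B g
  have hB := Finset.sum_inter_add_sum_sdiff B A g
  have habs : ∀ C : Finset ℕ, |∑ t ∈ C, g t| ≤ (C.card : ℝ) := by
    intro C
    calc |∑ t ∈ C, g t| ≤ ∑ t ∈ C, |g t| := Finset.abs_sum_le_sum_abs _ _
      _ ≤ ∑ t ∈ C, (1:ℝ) := Finset.sum_le_sum fun t _ => hg t
      _ = C.card := by simp
  have h : ∑ t ∈ A, g t - ∑ t ∈ B, g t = ∑ t ∈ A \ B, g t - ∑ t ∈ B \ A, g t := by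
    rw [← hA, ← hB, Finset.inter_comm]; ring
  rw [h]
  exact (abs_sub _ _).trans (add_le_add (habs _) (habs _))

lemma aux_shift (lo hi j : ℕ) (g : ℕ → ℝ) (hg : ∀ t, |g t| ≤ 1) :
    |∑ k ∈ Finset.Icc lo hi, g (j + k) - ∑ k ∈ Finset.Icc lo hi, g k| ≤ 2 * (j : ℝ) := by
  rcases Nat.eq_zero_or_pos j with rfl | hj
  · simp
  have hmap : ∑ k ∈ Finset.Icc lo hi, g (j + k)
      = ∑ t ∈ Finset.Icc (j + lo) (j + hi), g t := by
    rw [← Finset.map_add_left_Icc, Finset.sum_map]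
    rfl
  rw [hmap]
  refine le_trans (aux_sum_diff _ _ g hg) ?_
  have h1 : (Finset.Icc (j+lo) (j+hi) \ Finset.Icc lo hi) ⊆ Finset.Icc (hi+1) (hi+j) := by
    intro t ht
    simp only [Finset.mem_sdiff, Finset.mem_Icc, not_and, not_le] at ht ⊢
    omega
  have h2 : (Finset.Icc lo hi \ Finset.Icc (j+lo) (j+hi)) ⊆ Finset.Icc lo (lo+j-1) := by
    intro t ht
    simp only [Finset.mem_sdiff, Finset.mem_Icc, not_and, not_le] at ht ⊢
    omega
  have c1 : ((Finset.Icc (j+lo) (j+hi) \ Finset.Icc lo hi).card : ℝ) ≤ (j:ℝ) := by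
    have := Finset.card_le_card h1
    rw [Nat.card_Icc] at this
    exact_mod_cast le_trans (Nat.cast_le.2 this) (by push_cast; omega)
  have c2 : ((Finset.Icc lo hi \ Finset.Icc (j+lo) (j+hi)).card : ℝ) ≤ (j:ℝ) := by
    have := Finset.card_le_card h2
    rw [Nat.card_Icc] at this
    exact_mod_cast le_trans (Nat.cast_le.2 this) (by push_cast; omega)
  linarith

theorem statement15 (E : ExplicitConstruction) (i : ℕ) (hi : 1 ≤ i)
    (hbig : ∀ m ∈ Finset.Icc 1 (Mfun E.ε i), E.d ≤ (E.sub i m).card)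
    (ν : ℕ → ℕ)
    (hν : ∀ m ∈ Finset.Icc 1 (Mfun E.ε i), ∀ k ∈ E.sub i m, ν k = 2 ^ k + m)
    (f : ℝ → ℝ)
    (hf : ∀ x, f x = ∑ j ∈ Finset.range E.d, Real.cos (2 * Real.pi * 2 ^ j * x)) :
    ∀ x : ℝ,
      |∑ k ∈ Block E.R i, f ((ν k : ℝ) * x)
        - ∑ m ∈ Finset.Icc 1 (Mfun E.ε i),
            ((∑ j ∈ Finset.range E.d, Real.cos (2 * Real.pi * 2 ^ j * m * x)) *
               (∑ k ∈ E.sub i m, Real.cos (2 * Real.pi * 2 ^ k * x))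
             - (∑ j ∈ Finset.range E.d, Real.sin (2 * Real.pi * 2 ^ j * m * x)) *
               (∑ k ∈ E.sub i m, Real.sin (2 * Real.pi * 2 ^ k * x)))|
        ≤ (E.d : ℝ) ^ 2 * (Mfun E.ε i : ℝ) := by
  intro x
  have hdisj : Set.PairwiseDisjoint ↑(Finset.Icc 1 (Mfun E.ε i)) (E.sub i) := by
    intro m hm m' hm' hne
    simp only [Function.onFun]
    rw [Finset.disjoint_left]
    intro k hk hk'
    rcases lt_or_gt_of_ne hne with h | h
    · exact lt_irrefl k (E.horder i hi m hm m' hm' h k hk k hk')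
    · exact lt_irrefl k (E.horder i hi m' hm' m hm h k hk' k hk)
  rw [E.hpart i hi, Finset.sum_biUnion hdisj, ← Finset.sum_sub_distrib]
  -- per m bound
  have key : ∀ m ∈ Finset.Icc 1 (Mfun E.ε i),
      |∑ k ∈ E.sub i m, f ((ν k : ℝ) * x)
        - ((∑ j ∈ Finset.range E.d, Real.cos (2 * Real.pi * 2 ^ j * m * x)) *
             (∑ k ∈ E.sub i m, Real.cos (2 * Real.pi * 2 ^ k * x))
           - (∑ j ∈ Finset.range E.d, Real.sin (2 * Real.pi * 2 ^ j * m * x)) *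
             (∑ k ∈ E.sub i m, Real.sin (2 * Real.pi * 2 ^ k * x)))| ≤ (E.d : ℝ) ^ 2 := by
    intro m hm
    obtain ⟨lo, hi', hS⟩ := E.hconsec i hi m hm
    set g : ℕ → ℕ → ℝ := fun j t =>
      Real.cos (2 * Real.pi * 2 ^ j * (m : ℝ) * x + 2 * Real.pi * 2 ^ t * x) with hg
    have hA : ∑ k ∈ E.sub i m, f ((ν k : ℝ) * x)
        = ∑ j ∈ Finset.range E.d, ∑ k ∈ E.sub i m, g j (j + k) := by
      rw [Finset.sum_comm]
      refine Finset.sum_congr rfl fun k hk => ?_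
      rw [hf]
      refine Finset.sum_congr rfl fun j _ => ?_
      have hνk : (ν k : ℝ) = 2 ^ k + (m : ℝ) := by
        rw [hν m hm k hk]; push_cast; ring
      simp only [hg]
      congr 1
      rw [hνk, pow_add]
      ring
    have hB : (∑ j ∈ Finset.range E.d, Real.cos (2 * Real.pi * 2 ^ j * m * x)) *
             (∑ k ∈ E.sub i m, Real.cos (2 * Real.pi * 2 ^ k * x))
           - (∑ j ∈ Finset.range E.d, Real.sin (2 * Real.pi * 2 ^ j * m * x)) *
             (∑ k ∈ E.sub i m, Real.sin (2 * Real.pi * 2 ^ k * x))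
        = ∑ j ∈ Finset.range E.d, ∑ k ∈ E.sub i m, g j k := by
      rw [Finset.sum_mul_sum, Finset.sum_mul_sum, ← Finset.sum_sub_distrib]
      refine Finset.sum_congr rfl fun j _ => ?_
      rw [← Finset.sum_sub_distrib]
      refine Finset.sum_congr rfl fun k _ => ?_
      simp only [hg]
      rw [Real.cos_add]
    rw [hA, hB, ← Finset.sum_sub_distrib]
    calc |∑ j ∈ Finset.range E.d,
            (∑ k ∈ E.sub i m, g j (j + k) - ∑ k ∈ E.sub i m, g j k)|
        ≤ ∑ j ∈ Finset.range E.d,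
            |∑ k ∈ E.sub i m, g j (j + k) - ∑ k ∈ E.sub i m, g j k| :=
          Finset.abs_sum_le_sum_abs _ _
      _ ≤ ∑ j ∈ Finset.range E.d, 2 * (j : ℝ) := by
          refine Finset.sum_le_sum fun j _ => ?_
          rw [hS]
          exact aux_shift lo hi' j (g j) fun t => Real.abs_cos_le_one _
      _ ≤ (E.d : ℝ) ^ 2 := by
          have h1 : ∑ j ∈ Finset.range E.d, 2 * (j : ℝ)
              = ((∑ j ∈ Finset.range E.d, 2 * j : ℕ) : ℝ) := by push_cast; rfl
          have h2 : (∑ j ∈ Finset.range E.d, 2 * j) ≤ E.d ^ 2 := by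
            rw [← Finset.mul_sum, mul_comm, Finset.sum_range_id_mul_two]
            calc E.d * (E.d - 1) ≤ E.d * E.d := Nat.mul_le_mul_left _ (Nat.sub_le _ _)
              _ = E.d ^ 2 := (sq E.d).symm
          rw [h1]
          exact_mod_cast h2
  calc |∑ m ∈ Finset.Icc 1 (Mfun E.ε i), _| ≤ _ := Finset.abs_sum_le_sum_abs _ _
    _ ≤ ∑ _m ∈ Finset.Icc 1 (Mfun E.ε i), (E.d : ℝ) ^ 2 := Finset.sum_le_sum key
    _ = (E.d : ℝ) ^ 2 * (Mfun E.ε i : ℝ) := by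
        rw [Finset.sum_const, Nat.card_Icc]
        simp [nsmul_eq_mul, mul_comm]
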